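/- Let α > −1 and α + β ≥ 1/2. There is a constant C = C(α,β) such that for every measurable f ≥ 0 on (0,∞) and every x > 0: Φ^{α,β}_{*,E} f(x) ≤ C ( L f(x) + H_{2α+β+1} f(4x) + x^β R(z ↦ z^{−β} f(z))(x) ), and Φ^{α,β}_{*,F} f(x) ≤ C ( χ_{{β ≥ 1}} H_{2α+2} f(2x) + χ_{{β < 1}} H_{2α+β+1} f(2x) + N_{2α+2} f(x) + T_{1−β} f(x) ). -/

import Mathlib

open MeasureTheory Set Filter
open scoped ENNReal NNReal

noncomputable def PhiE (a b t x z : ℝ) : ℝ :=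
  if |x - z| < t ∧ t < x + z then
    (x * z) ^ (-a - 1/2) * t ^ (-(2*a) - 2*b) * (t ^ 2 - (x - z) ^ 2) ^ (a + b - 1/2)
  else 0

noncomputable def PhiF (a b t x z : ℝ) : ℝ :=
  if x + z < t then t ^ (-(2*a) - 2*b) * (t ^ 2 - (x - z) ^ 2) ^ (b - 1) else 0

noncomputable def PhiStarE (a b : ℝ) (f : ℝ → ℝ) (x : ℝ) : ℝ≥0∞ :=
  ⨆ t ∈ Set.Ioi (0 : ℝ),
    ∫⁻ z in Set.Ioi (0 : ℝ), ENNReal.ofReal (PhiE a b t x z * f z * z ^ (2 * a + 1))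

noncomputable def PhiStarF (a b : ℝ) (f : ℝ → ℝ) (x : ℝ) : ℝ≥0∞ :=
  ⨆ t ∈ Set.Ioi (0 : ℝ),
    ∫⁻ z in Set.Ioi (0 : ℝ), ENNReal.ofReal (PhiF a b t x z * f z * z ^ (2 * a + 1))

noncomputable def locHL (f : ℝ → ℝ) (x : ℝ) : ℝ≥0∞ :=
  ⨆ t ∈ Set.Ioo (0 : ℝ) (x / 2),
    (ENNReal.ofReal (2 * t))⁻¹ * ∫⁻ z in Set.Icc (x - t) (x + t), ENNReal.ofReal |f z|

noncomputable def Hop (η : ℝ) (f : ℝ → ℝ) (x : ℝ) : ℝ≥0∞ :=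
  ENNReal.ofReal (x ^ (-η)) * ∫⁻ z in Set.Ioo (0 : ℝ) x, ENNReal.ofReal (z ^ (η - 1) * f z)

noncomputable def Rop (f : ℝ → ℝ) (x : ℝ) : ℝ≥0∞ :=
  ⨆ t ∈ Set.Ioi (2 * x),
    (ENNReal.ofReal (2 * x))⁻¹ * ∫⁻ z in Set.Icc (t - x) (t + x), ENNReal.ofReal |f z|

noncomputable def Nop (η : ℝ) (f : ℝ → ℝ) (x : ℝ) : ℝ≥0∞ :=
  ⨆ t ∈ Set.Ioi x,
    ENNReal.ofReal (t ^ (-η)) * ∫⁻ z in Set.Ioo (0 : ℝ) t, ENNReal.ofReal (z ^ (η - 1) * |f z|)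

noncomputable def Tmax (η : ℝ) (f : ℝ → ℝ) (x : ℝ) : ℝ≥0∞ :=
  ⨆ t ∈ Set.Ioi (2 * x),
    ∫⁻ z in Set.Ioo (t / 2) t, ENNReal.ofReal (z ^ (η - 1) * |f z| * (t - z + x) ^ (-η))

-- AUX (to be inserted between defs and theorem)
section PhiAux

lemma rpow_bound {c lo z hi : ℝ} (h0 : 0 < lo) (h1 : lo ≤ z) (h2 : z ≤ hi) :
    z ^ c ≤ max (lo ^ c) (hi ^ c) := by
  rcases le_or_gt 0 c with hc | hc
  · exact le_max_of_le_right (Real.rpow_le_rpow (h0.le.trans h1) h2 hc)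
  · exact le_max_of_le_left (Real.rpow_le_rpow_of_nonpos h0 h1 hc.le)

lemma lint_ind {h : ℝ → ℝ≥0∞} {S : Set ℝ} (hS : MeasurableSet S) :
    ∫⁻ z in Set.Ioi (0:ℝ), S.indicator h z ≤ ∫⁻ z in S, h z := by
  rw [lintegral_indicator hS, Measure.restrict_restrict hS]
  exact lintegral_mono_set inter_subset_left

lemma lint_aux {g g' : ℝ → ℝ} {S : Set ℝ} (hS : MeasurableSet S)
    (h : ∀ z ∈ Set.Ioi (0:ℝ), g z ≤ S.indicator g' z) :
    (∫⁻ z in Set.Ioi (0:ℝ), ENNReal.ofReal (g z)) ≤ ∫⁻ z in S, ENNReal.ofReal (g' z) := by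
  refine le_trans ?_ (lint_ind (h := fun z => ENNReal.ofReal (g' z)) hS)
  refine setLIntegral_mono' measurableSet_Ioi fun z hz => ?_
  by_cases hzS : z ∈ S
  · rw [Set.indicator_of_mem hzS]
    exact ENNReal.ofReal_le_ofReal (by simpa [Set.indicator_of_mem hzS] using h z hz)
  · have := h z hz
    rw [Set.indicator_of_notMem hzS] at this
    simp [Set.indicator_of_notMem hzS, ENNReal.ofReal_eq_zero.mpr this]

lemma lint_const (K : ℝ) (hK : 0 ≤ K) (g : ℝ → ℝ) (S : Set ℝ) :
    ∫⁻ z in S, ENNReal.ofReal (K * g z) = ENNReal.ofReal K * ∫⁻ z in S, ENNReal.ofReal (g z) := by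
  simp_rw [ENNReal.ofReal_mul hK]
  exact lintegral_const_mul' _ _ ENNReal.ofReal_ne_top

lemma sq_rpow {t : ℝ} (ht : 0 ≤ t) (c : ℝ) : ((t^2 : ℝ)) ^ c = t ^ (2*c) := by
  rw [show (t^2:ℝ) = t ^ ((2:ℕ):ℝ) by rw [Real.rpow_natCast], ← Real.rpow_mul ht]
  norm_num

end PhiAux

noncomputable def K1E (a b : ℝ) : ℝ :=
  2 * max ((1/2:ℝ) ^ (-a - 1/2)) ((3/2:ℝ) ^ (-a - 1/2))
    * max ((1/2:ℝ) ^ (2*a + 1)) ((3/2:ℝ) ^ (2*a + 1))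

lemma K1E_nonneg (a b : ℝ) : 0 ≤ K1E a b := by
  unfold K1E; positivity

lemma E1_pt (a b t x z : ℝ) (hab : 1/2 ≤ a + b) (hx : 0 < x) (ht : 0 < t) (ht2 : t < x/2)
    (hz : 0 < z) (f : ℝ → ℝ) (hfz : 0 ≤ f z) :
    PhiE a b t x z * f z * z ^ (2*a + 1) ≤
      (Icc (x - t) (x + t)).indicator (fun z => K1E a b * ((2*t)⁻¹ * |f z|)) z := by
  unfold PhiE
  by_cases hc : |x - z| < t ∧ t < x + z
  · obtain ⟨h1, h2⟩ := hc
    have h1' := abs_lt.mp h1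
    have hmem : z ∈ Icc (x - t) (x + t) := ⟨by linarith [h1'.2], by linarith [h1'.1]⟩
    rw [if_pos ⟨h1, h2⟩, Set.indicator_of_mem hmem, abs_of_nonneg hfz]
    have hz1 : (1/2) * x ≤ z := by linarith [h1'.2]
    have hz2 : z ≤ (3/2) * x := by linarith [h1'.1]
    have hP0 : 0 ≤ t^2 - (x-z)^2 := by nlinarith [h1'.1, h1'.2]
    have hPle : t^2 - (x-z)^2 ≤ t^2 := by nlinarith [sq_nonneg (x-z)]
    -- kernel pieces
    have e1 : (t^2 - (x-z)^2) ^ (a+b-1/2) ≤ t ^ (2*(a+b-1/2)) := by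
      rw [← sq_rpow ht.le]
      exact Real.rpow_le_rpow hP0 hPle (by linarith)
    have e3 : t ^ (-(2*a) - 2*b) * t ^ (2*(a+b-1/2)) = t⁻¹ := by
      rw [← Real.rpow_add ht, show -(2*a) - 2*b + 2*(a+b-1/2) = -1 by ring, Real.rpow_neg_one]
    set Mx := max ((1/2:ℝ) ^ (-a - 1/2)) ((3/2:ℝ) ^ (-a - 1/2)) with hMx
    set Mz := max ((1/2:ℝ) ^ (2*a + 1)) ((3/2:ℝ) ^ (2*a + 1)) with hMz
    have e4 : (x*z) ^ (-a - 1/2) ≤ Mx * (x^2 : ℝ) ^ (-a - 1/2) := by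
      have h4a : (x*z) ^ (-a-1/2) ≤ max (((1/2) * x^2) ^ (-a-1/2)) (((3/2) * x^2) ^ (-a-1/2)) :=
        rpow_bound (by positivity) (by nlinarith) (by nlinarith)
      calc (x*z) ^ (-a-1/2) ≤ _ := h4a
        _ = Mx * (x^2:ℝ) ^ (-a-1/2) := by
            rw [Real.mul_rpow (by norm_num) (by positivity),
              Real.mul_rpow (by norm_num) (by positivity), hMx, max_mul_of_nonneg _ _ (by positivity)]
    have e5 : z ^ (2*a+1) ≤ Mz * x ^ (2*a+1) := by
      have h5a : z ^ (2*a+1) ≤ max (((1/2) * x) ^ (2*a+1)) (((3/2) * x) ^ (2*a+1)) :=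
        rpow_bound (by positivity) hz1 hz2
      calc z ^ (2*a+1) ≤ _ := h5a
        _ = Mz * x ^ (2*a+1) := by
            rw [Real.mul_rpow (by norm_num) hx.le, Real.mul_rpow (by norm_num) hx.le, hMz,
              max_mul_of_nonneg _ _ (by positivity)]
    have e6 : (x^2:ℝ) ^ (-a-1/2) * x ^ (2*a+1) = 1 := by
      rw [sq_rpow hx.le, ← Real.rpow_add hx, show 2*(-a-1/2) + (2*a+1) = 0 by ring, Real.rpow_zero]
    have hMxpos : 0 ≤ Mx := le_max_of_le_left (by positivity)
    have hMzpos : 0 ≤ Mz := le_max_of_le_left (by positivity)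
    calc (x*z) ^ (-a-1/2) * t ^ (-(2*a)-2*b) * (t^2-(x-z)^2) ^ (a+b-1/2) * f z * z ^ (2*a+1)
        ≤ (Mx * (x^2:ℝ) ^ (-a-1/2)) * t ^ (-(2*a)-2*b) * t ^ (2*(a+b-1/2)) * f z
            * (Mz * x ^ (2*a+1)) := by
          apply mul_le_mul (mul_le_mul (mul_le_mul (mul_le_mul e4 le_rfl (by positivity)
            (by positivity)) e1 (by positivity) (by positivity)) le_rfl hfz (by positivity)) e5
            (by positivity) (by positivity)
      _ = (Mx * Mz) * ((x^2:ℝ) ^ (-a-1/2) * x ^ (2*a+1)) * (t ^ (-(2*a)-2*b) * t ^ (2*(a+b-1/2)))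
            * f z := by ring
      _ = (Mx * Mz) * t⁻¹ * f z := by rw [e3, e6]; ring
      _ = K1E a b * ((2*t)⁻¹ * f z) := by
          rw [show K1E a b = 2*(Mx*Mz) by rw [K1E, hMx, hMz]; ring]
          field_simp
  · rw [if_neg hc, zero_mul, zero_mul]
    exact Set.indicator_nonneg (fun z _ => mul_nonneg (K1E_nonneg a b) (by positivity)) z

noncomputable def K2E (a b : ℝ) : ℝ :=
  (1/2:ℝ) ^ (-(2*a) - 2*b) * 4 ^ (a + b - 1/2) * 4 ^ (2*a + b + 1)

lemma K2E_nonneg (a b : ℝ) : 0 ≤ K2E a b := by unfold K2E; positivity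

lemma E2_pt (a b t x z : ℝ) (hab : 1/2 ≤ a + b) (hx : 0 < x) (ht1 : x/2 ≤ t) (ht2 : t ≤ 3*x)
    (hz : 0 < z) (f : ℝ → ℝ) (hf : ∀ w, 0 ≤ f w) :
    PhiE a b t x z * f z * z ^ (2*a + 1) ≤
      (Ioo 0 (4*x)).indicator
        (fun z => K2E a b * ((4*x) ^ (-(2*a + b + 1)) * (z ^ (2*a + b + 1 - 1) * f z))) z := by
  have hfz : 0 ≤ f z := hf z
  unfold PhiE
  by_cases hc : |x - z| < t ∧ t < x + z
  · obtain ⟨h1, h2⟩ := hc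
    have h1' := abs_lt.mp h1
    have hmem : z ∈ Ioo 0 (4*x) := ⟨hz, by linarith [h1'.1]⟩
    rw [if_pos ⟨h1, h2⟩, Set.indicator_of_mem hmem]
    have ht : 0 < t := by linarith
    have hP0 : 0 ≤ t^2 - (x-z)^2 := by nlinarith [h1'.1, h1'.2]
    have hP4 : t^2 - (x-z)^2 ≤ 4*(x*z) := by nlinarith
    have e1 : (t^2 - (x-z)^2) ^ (a+b-1/2) ≤ (4*(x*z)) ^ (a+b-1/2) :=
      Real.rpow_le_rpow hP0 hP4 (by linarith)
    have e2 : t ^ (-(2*a) - 2*b) ≤ ((1/2)*x) ^ (-(2*a) - 2*b) :=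
      Real.rpow_le_rpow_of_nonpos (by positivity) (by linarith) (by linarith)
    calc (x*z) ^ (-a - 1/2) * t ^ (-(2*a) - 2*b) * (t^2 - (x-z)^2) ^ (a+b-1/2) * f z
          * z ^ (2*a+1)
        ≤ (x*z) ^ (-a - 1/2) * (((1/2)*x) ^ (-(2*a) - 2*b)) * ((4*(x*z)) ^ (a+b-1/2)) * f z
          * z ^ (2*a+1) := by
          gcongr <;> first | positivity | exact hfz
      _ = ((1/2:ℝ) ^ (-(2*a) - 2*b) * 4 ^ (a+b-1/2))
          * (x ^ (-a-1/2) * x ^ (-(2*a) - 2*b) * x ^ (a+b-1/2))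
          * (z ^ (-a-1/2) * z ^ (a+b-1/2) * z ^ (2*a+1)) * f z := by
          rw [Real.mul_rpow hx.le hz.le, Real.mul_rpow (by norm_num) hx.le,
            Real.mul_rpow (by norm_num) (by positivity), Real.mul_rpow hx.le hz.le]
          ring
      _ = ((1/2:ℝ) ^ (-(2*a) - 2*b) * 4 ^ (a+b-1/2)) * x ^ (-2*a - b - 1)
          * z ^ (2*a + b + 1 - 1) * f z := by
          rw [← Real.rpow_add hx, ← Real.rpow_add hx, ← Real.rpow_add hz, ← Real.rpow_add hz]
          rw [show -a-1/2 + (-(2*a) - 2*b) + (a+b-1/2) = -2*a - b - 1 by ring,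
            show -a-1/2 + (a+b-1/2) + (2*a+1) = 2*a + b + 1 - 1 by ring]
      _ = K2E a b * ((4*x) ^ (-(2*a + b + 1)) * (z ^ (2*a + b + 1 - 1) * f z)) := by
          rw [show x ^ (-2*a - b - 1) = (4:ℝ) ^ (2*a+b+1) * (4*x) ^ (-(2*a + b + 1)) by
            rw [Real.mul_rpow (by norm_num) hx.le, ← mul_assoc,
              ← Real.rpow_add (by norm_num : (0:ℝ) < 4),
              show (2*a+b+1) + (-(2*a+b+1)) = 0 by ring, Real.rpow_zero, one_mul]
            congr 1; ring]
          rw [K2E]; ring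
  · rw [if_neg hc, zero_mul, zero_mul]
    exact Set.indicator_nonneg (fun w hw => mul_nonneg (K2E_nonneg a b)
      (mul_nonneg (Real.rpow_nonneg (by positivity) _)
        (mul_nonneg (Real.rpow_nonneg hw.1.le _) (hf w)))) z

noncomputable def K3E (a b : ℝ) : ℝ :=
  4 ^ (a + b - 1/2) * max ((2/3:ℝ) ^ (2*a + 2*b)) ((4/3:ℝ) ^ (2*a + 2*b)) * 2

lemma K3E_nonneg (a b : ℝ) : 0 ≤ K3E a b := by unfold K3E; positivity

lemma E3_pt (a b t x z : ℝ) (hab : 1/2 ≤ a + b) (hx : 0 < x) (ht : 3*x < t)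
    (hz : 0 < z) (f : ℝ → ℝ) (hfz : 0 ≤ f z) :
    PhiE a b t x z * f z * z ^ (2*a + 1) ≤
      (Icc (t - x) (t + x)).indicator
        (fun z => K3E a b * (x ^ b * ((2*x)⁻¹ * |z ^ (-b) * f z|))) z := by
  unfold PhiE
  by_cases hc : |x - z| < t ∧ t < x + z
  · obtain ⟨h1, h2⟩ := hc
    have h1' := abs_lt.mp h1
    have hmem : z ∈ Icc (t - x) (t + x) := ⟨by linarith, by linarith [h1'.1]⟩
    rw [if_pos ⟨h1, h2⟩, Set.indicator_of_mem hmem,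
      abs_of_nonneg (mul_nonneg (by positivity) hfz)]
    have htp : 0 < t := by linarith
    have hz23 : (2/3)*t ≤ z := by linarith
    have hz43 : z ≤ (4/3)*t := by linarith [h1'.1]
    have hP0 : 0 ≤ t^2 - (x-z)^2 := by nlinarith [h1'.1, h1'.2]
    have hP4 : t^2 - (x-z)^2 ≤ 4*(x*z) := by nlinarith
    have e1 : (t^2 - (x-z)^2) ^ (a+b-1/2) ≤ (4*(x*z)) ^ (a+b-1/2) :=
      Real.rpow_le_rpow hP0 hP4 (by linarith)
    set M3 := max ((2/3:ℝ) ^ (2*a + 2*b)) ((4/3:ℝ) ^ (2*a + 2*b)) with hM3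
    have hM3n : 0 ≤ M3 := le_max_of_le_left (by positivity)
    have e5 : z ^ (2*a + 2*b) ≤ M3 * t ^ (2*a + 2*b) := by
      calc z ^ (2*a+2*b) ≤ max (((2/3)*t) ^ (2*a+2*b)) (((4/3)*t) ^ (2*a+2*b)) :=
            rpow_bound (by positivity) hz23 hz43
        _ = M3 * t ^ (2*a+2*b) := by
            rw [Real.mul_rpow (by norm_num) htp.le, Real.mul_rpow (by norm_num) htp.le, hM3,
              max_mul_of_nonneg _ _ (by positivity)]
    calc (x*z) ^ (-a - 1/2) * t ^ (-(2*a) - 2*b) * (t^2 - (x-z)^2) ^ (a+b-1/2) * f z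
          * z ^ (2*a+1)
        ≤ (x*z) ^ (-a - 1/2) * t ^ (-(2*a) - 2*b) * ((4*(x*z)) ^ (a+b-1/2)) * f z
          * z ^ (2*a+1) := by
          gcongr <;> first | positivity | exact hfz
      _ = (4:ℝ) ^ (a+b-1/2) * (x ^ (-a-1/2) * x ^ (a+b-1/2))
          * (z ^ (-a-1/2) * z ^ (a+b-1/2) * z ^ (2*a+1)) * t ^ (-(2*a) - 2*b) * f z := by
          rw [Real.mul_rpow hx.le hz.le, Real.mul_rpow (by norm_num) (by positivity),
            Real.mul_rpow hx.le hz.le]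
          ring
      _ = (4:ℝ) ^ (a+b-1/2) * x ^ (b-1) * (z ^ (2*a+2*b) * z ^ (-b)) * t ^ (-(2*a) - 2*b)
          * f z := by
          rw [← Real.rpow_add hx, ← Real.rpow_add hz, ← Real.rpow_add hz,
            show (-a-1/2 + (a+b-1/2) : ℝ) = b-1 by ring,
            show (b-1 + (2*a+1) : ℝ) = 2*a+2*b + -b by ring, Real.rpow_add hz]
      _ ≤ (4:ℝ) ^ (a+b-1/2) * x ^ (b-1) * ((M3 * t ^ (2*a+2*b)) * z ^ (-b))
          * t ^ (-(2*a) - 2*b) * f z := by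
          gcongr <;> first | positivity | exact hfz
      _ = (4:ℝ) ^ (a+b-1/2) * M3 * x ^ (b-1) * (t ^ (2*a+2*b) * t ^ (-(2*a) - 2*b))
          * (z ^ (-b) * f z) := by ring
      _ = (4:ℝ) ^ (a+b-1/2) * M3 * x ^ (b-1) * (z ^ (-b) * f z) := by
          rw [← Real.rpow_add htp, show (2*a+2*b) + (-(2*a) - 2*b) = 0 by ring, Real.rpow_zero,
            mul_one]
      _ = K3E a b * (x ^ b * ((2*x)⁻¹ * (z ^ (-b) * f z))) := by
          rw [show x ^ (b-1) = 2 * (x ^ b * (2*x)⁻¹) by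
            rw [Real.rpow_sub hx, Real.rpow_one]; field_simp]
          rw [K3E, hM3]; ring
  · rw [if_neg hc, zero_mul, zero_mul]
    exact Set.indicator_nonneg (fun z hz' => mul_nonneg (K3E_nonneg a b) (by positivity)) z

lemma F1_pt (a b t x z : ℝ) (hb : 1 ≤ b) (hx : 0 < x) (htx : x < t)
    (hz : 0 < z) (f : ℝ → ℝ) (hf : ∀ w, 0 ≤ f w) :
    PhiF a b t x z * f z * z ^ (2*a + 1) ≤
      (Ioo 0 t).indicator (fun z => t ^ (-(2*a + 2)) * (z ^ (2*a + 2 - 1) * |f z|)) z := by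
  have htp : 0 < t := lt_trans hx htx
  unfold PhiF
  by_cases hc : x + z < t
  · have hmem : z ∈ Ioo 0 t := ⟨hz, by linarith⟩
    rw [if_pos hc, Set.indicator_of_mem hmem, abs_of_nonneg (hf z)]
    have hP0 : 0 ≤ t^2 - (x-z)^2 := by nlinarith [mul_pos hx hz]
    have e1 : (t^2 - (x-z)^2) ^ (b-1) ≤ t ^ (2*(b-1)) := by
      rw [← sq_rpow htp.le]
      exact Real.rpow_le_rpow hP0 (by nlinarith [sq_nonneg (x-z)]) (by linarith)
    calc t ^ (-(2*a) - 2*b) * (t^2 - (x-z)^2) ^ (b-1) * f z * z ^ (2*a+1)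
        ≤ t ^ (-(2*a) - 2*b) * t ^ (2*(b-1)) * f z * z ^ (2*a+1) := by
          gcongr <;> first | positivity | exact hf z
      _ = t ^ (-(2*a + 2)) * (z ^ (2*a + 2 - 1) * f z) := by
          rw [← Real.rpow_add htp, show -(2*a) - 2*b + 2*(b-1) = -(2*a+2) by ring,
            show (2*a + 2 - 1 : ℝ) = 2*a + 1 by ring]
          ring
  · rw [if_neg hc, zero_mul, zero_mul]
    exact Set.indicator_nonneg (fun w hw => mul_nonneg (Real.rpow_nonneg htp.le _)
      (mul_nonneg (Real.rpow_nonneg hw.1.le _) (abs_nonneg _))) z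

noncomputable def K4F (a b : ℝ) : ℝ := (2:ℝ) ^ (b - 1) * 2 ^ (2*a + b + 1)

lemma K4F_nonneg (a b : ℝ) : 0 ≤ K4F a b := by unfold K4F; positivity

lemma F2_pt (a b t x z : ℝ) (hab : 1/2 ≤ a + b) (hb : b < 1) (hx : 0 < x) (htx : x < t)
    (ht2 : t ≤ 2*x) (hz : 0 < z) (f : ℝ → ℝ) (hf : ∀ w, 0 ≤ f w) :
    PhiF a b t x z * f z * z ^ (2*a + 1) ≤
      (Ioo 0 (2*x)).indicator
        (fun z => K4F a b * ((2*x) ^ (-(2*a + b + 1)) * (z ^ (2*a + b + 1 - 1) * f z))) z := by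
  unfold PhiF
  by_cases hc : x + z < t
  · have hmem : z ∈ Ioo 0 (2*x) := ⟨hz, by linarith⟩
    rw [if_pos hc, Set.indicator_of_mem hmem]
    have hP2 : 2*(x*z) ≤ t^2 - (x-z)^2 := by nlinarith [mul_pos hx hz]
    have hP0 : 0 ≤ t^2 - (x-z)^2 := le_trans (by positivity) hP2
    have e1 : (t^2 - (x-z)^2) ^ (b-1) ≤ (2*(x*z)) ^ (b-1) :=
      Real.rpow_le_rpow_of_nonpos (by positivity) hP2 (by linarith)
    have e2 : t ^ (-(2*a) - 2*b) ≤ x ^ (-(2*a) - 2*b) :=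
      Real.rpow_le_rpow_of_nonpos hx htx.le (by linarith)
    calc t ^ (-(2*a) - 2*b) * (t^2 - (x-z)^2) ^ (b-1) * f z * z ^ (2*a+1)
        ≤ x ^ (-(2*a) - 2*b) * (2*(x*z)) ^ (b-1) * f z * z ^ (2*a+1) := by
          gcongr <;> first | positivity | exact hf z | exact Real.rpow_nonneg hP0 _
      _ = (2:ℝ) ^ (b-1) * (x ^ (-(2*a) - 2*b) * x ^ (b-1)) * (z ^ (b-1) * z ^ (2*a+1))
          * f z := by
          rw [Real.mul_rpow (by norm_num) (by positivity), Real.mul_rpow hx.le hz.le]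
          ring
      _ = (2:ℝ) ^ (b-1) * x ^ (-2*a - b - 1) * z ^ (2*a + b + 1 - 1) * f z := by
          rw [← Real.rpow_add hx, ← Real.rpow_add hz,
            show (-(2*a) - 2*b + (b-1) : ℝ) = -2*a - b - 1 by ring,
            show (b-1 + (2*a+1) : ℝ) = 2*a + b + 1 - 1 by ring]
      _ = K4F a b * ((2*x) ^ (-(2*a + b + 1)) * (z ^ (2*a + b + 1 - 1) * f z)) := by
          rw [show x ^ (-2*a - b - 1) = (2:ℝ) ^ (2*a+b+1) * (2*x) ^ (-(2*a + b + 1)) by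
            rw [Real.mul_rpow (by norm_num) hx.le, ← mul_assoc,
              ← Real.rpow_add (by norm_num : (0:ℝ) < 2),
              show (2*a+b+1) + (-(2*a+b+1)) = 0 by ring, Real.rpow_zero, one_mul]
            congr 1; ring]
          rw [K4F]; ring
  · rw [if_neg hc, zero_mul, zero_mul]
    exact Set.indicator_nonneg (fun w hw => mul_nonneg (K4F_nonneg a b)
      (mul_nonneg (Real.rpow_nonneg (by positivity) _)
        (mul_nonneg (Real.rpow_nonneg hw.1.le _) (hf w)))) z

noncomputable def K5F (b : ℝ) : ℝ := (1/2:ℝ) ^ (b - 1) * (1/2:ℝ) ^ (b - 1)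
noncomputable def K6F (b : ℝ) : ℝ := (1/2:ℝ) ^ (b - 1)

lemma K5F_nonneg (b : ℝ) : 0 ≤ K5F b := by unfold K5F; positivity
lemma K6F_nonneg (b : ℝ) : 0 ≤ K6F b := by unfold K6F; positivity

lemma F34_pt (a b t x z : ℝ) (ha : -1 < a) (hab : 1/2 ≤ a + b) (hb : b < 1) (hx : 0 < x)
    (ht : 2*x < t) (hz : 0 < z) (f : ℝ → ℝ) (hf : ∀ w, 0 ≤ f w) :
    ENNReal.ofReal (PhiF a b t x z * f z * z ^ (2*a + 1)) ≤
      (Ioo 0 t).indicator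
        (fun z => ENNReal.ofReal (K5F b * (t ^ (-(2*a + 2)) * (z ^ (2*a + 2 - 1) * |f z|)))) z
      + (Ioo (t/2) t).indicator
        (fun z => ENNReal.ofReal
          (K6F b * (z ^ (1 - b - 1) * |f z| * (t - z + x) ^ (-(1 - b))))) z := by
  have htp : 0 < t := by linarith
  by_cases hc : x + z < t
  · have hfac : t^2 - (x-z)^2 = (t - x + z) * (t + x - z) := by ring
    rcases le_or_gt z (t/2) with hle | hgt
    · -- Nop part
      have hmem : z ∈ Ioo 0 t := ⟨hz, by linarith⟩
      refine le_trans ?_ (le_add_right (le_refl _))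
      rw [Set.indicator_of_mem hmem]
      apply ENNReal.ofReal_le_ofReal
      rw [PhiF, if_pos hc, abs_of_nonneg (hf z)]
      have hprod : ((1/2)*t) * ((1/2)*t) ≤ t^2 - (x-z)^2 := by
        rw [hfac]
        apply mul_le_mul (by linarith) (by linarith) (by positivity) (by linarith)
      have hP0 : 0 ≤ t^2 - (x-z)^2 := le_trans (by positivity) hprod
      have e1 : (t^2 - (x-z)^2) ^ (b-1) ≤ (((1/2)*t) * ((1/2)*t)) ^ (b-1) :=
        Real.rpow_le_rpow_of_nonpos (by positivity) hprod (by linarith)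
      calc t ^ (-(2*a) - 2*b) * (t^2 - (x-z)^2) ^ (b-1) * f z * z ^ (2*a+1)
          ≤ t ^ (-(2*a) - 2*b) * ((((1/2)*t) * ((1/2)*t)) ^ (b-1)) * f z * z ^ (2*a+1) := by
            gcongr <;> first | positivity | exact hf z | exact Real.rpow_nonneg hP0 _
        _ = K5F b * (t ^ (-(2*a) - 2*b) * (t ^ (b-1) * t ^ (b-1))) * f z * z ^ (2*a+1) := by
            rw [Real.mul_rpow (by positivity) (by positivity),
              Real.mul_rpow (by norm_num) htp.le, K5F]
            ring
        _ = K5F b * (t ^ (-(2*a + 2)) * (z ^ (2*a + 2 - 1) * f z)) := by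
            rw [← Real.rpow_add htp, ← Real.rpow_add htp,
              show (-(2*a) - 2*b + (b - 1 + (b-1)) : ℝ) = -(2*a+2) by ring,
              show (2*a + 2 - 1 : ℝ) = 2*a + 1 by ring]
            ring
    · -- Tmax part
      have hmem : z ∈ Ioo (t/2) t := ⟨hgt, by linarith⟩
      refine le_trans ?_ (le_add_left (le_refl _))
      rw [Set.indicator_of_mem hmem]
      apply ENNReal.ofReal_le_ofReal
      rw [PhiF, if_pos hc, abs_of_nonneg (hf z)]
      have htxz : 0 < t + x - z := by linarith
      have hprod : ((1/2)*t) * (t + x - z) ≤ t^2 - (x-z)^2 := by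
        rw [hfac]
        exact mul_le_mul_of_nonneg_right (by linarith) htxz.le
      have hP0 : 0 ≤ t^2 - (x-z)^2 := le_trans (by positivity) hprod
      have e1 : (t^2 - (x-z)^2) ^ (b-1) ≤ (((1/2)*t) * (t + x - z)) ^ (b-1) :=
        Real.rpow_le_rpow_of_nonpos (by positivity) hprod (by linarith)
      have e6 : z ^ (2*a + 1 + b) ≤ t ^ (2*a + 1 + b) :=
        Real.rpow_le_rpow hz.le (by linarith) (by linarith)
      calc t ^ (-(2*a) - 2*b) * (t^2 - (x-z)^2) ^ (b-1) * f z * z ^ (2*a+1)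
          ≤ t ^ (-(2*a) - 2*b) * ((((1/2)*t) * (t + x - z)) ^ (b-1)) * f z * z ^ (2*a+1) := by
            gcongr <;> first | positivity | exact hf z | exact Real.rpow_nonneg hP0 _
        _ = K6F b * (t ^ (-(2*a) - 2*b) * t ^ (b-1)) * (t + x - z) ^ (b-1) * f z
            * (z ^ (2*a + 1 + b) * z ^ (-b)) := by
            rw [Real.mul_rpow (by positivity) htxz.le, Real.mul_rpow (by norm_num) htp.le,
              ← Real.rpow_add hz, show (2*a + 1 + b + -b : ℝ) = 2*a + 1 by ring, K6F]
            ring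
        _ ≤ K6F b * (t ^ (-(2*a) - 2*b) * t ^ (b-1)) * (t + x - z) ^ (b-1) * f z
            * (t ^ (2*a + 1 + b) * z ^ (-b)) := by
            have hside : 0 ≤ K6F b * (t ^ (-(2*a) - 2*b) * t ^ (b-1)) * (t + x - z) ^ (b-1)
                * f z :=
              mul_nonneg (mul_nonneg (mul_nonneg (by unfold K6F; positivity) (by positivity))
                (by positivity)) (hf z)
            gcongr <;> first | positivity | exact hf z | exact hside
        _ = K6F b * (t ^ (-(2*a) - 2*b) * t ^ (b-1) * t ^ (2*a + 1 + b))
            * ((t + x - z) ^ (b-1) * f z * z ^ (-b)) := by ring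
        _ = K6F b * (z ^ (1 - b - 1) * f z * (t - z + x) ^ (-(1 - b))) := by
            rw [← Real.rpow_add htp, ← Real.rpow_add htp,
              show (-(2*a) - 2*b + (b-1) + (2*a + 1 + b) : ℝ) = 0 by ring, Real.rpow_zero,
              show (1 - b - 1 : ℝ) = -b by ring, show (-(1-b) : ℝ) = b - 1 by ring,
              show t - z + x = t + x - z by ring]
            ring
  · rw [PhiF, if_neg hc, zero_mul, zero_mul, ENNReal.ofReal_zero]
    exact zero_le'

noncomputable def KE (a b : ℝ) : ℝ := max 1 (max (K1E a b) (max (K2E a b) (K3E a b)))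
noncomputable def KF (a b : ℝ) : ℝ := max 1 (max (K4F a b) (max (K5F b) (K6F b)))

lemma partE (a b : ℝ) (hab : 1/2 ≤ a + b) (f : ℝ → ℝ) (hf : ∀ z, 0 ≤ f z)
    (x : ℝ) (hx : 0 < x) :
    PhiStarE a b f x ≤ ENNReal.ofReal (KE a b) *
      (locHL f x + Hop (2*a + b + 1) f (4*x) +
        ENNReal.ofReal (x ^ b) * Rop (fun z => z ^ (-b) * f z) x) := by
  rw [PhiStarE]
  refine iSup₂_le fun t ht => ?_
  rw [Set.mem_Ioi] at ht
  rcases lt_or_ge t (x/2) with hcase | hcase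
  · calc ∫⁻ z in Set.Ioi (0:ℝ), ENNReal.ofReal (PhiE a b t x z * f z * z ^ (2*a + 1))
        ≤ ∫⁻ z in Set.Icc (x-t) (x+t), ENNReal.ofReal (K1E a b * ((2*t)⁻¹ * |f z|)) :=
          lint_aux measurableSet_Icc
            (fun z hz => E1_pt a b t x z hab hx ht hcase (Set.mem_Ioi.mp hz) f (hf z))
      _ = ENNReal.ofReal (K1E a b) *
          ∫⁻ z in Set.Icc (x-t) (x+t), ENNReal.ofReal ((2*t)⁻¹ * |f z|) :=
          lint_const _ (K1E_nonneg a b) _ _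
      _ = ENNReal.ofReal (K1E a b) *
          ((ENNReal.ofReal (2*t))⁻¹ * ∫⁻ z in Set.Icc (x-t) (x+t), ENNReal.ofReal |f z|) := by
          rw [lint_const _ (by positivity : (0:ℝ) ≤ (2*t)⁻¹) (fun z => |f z|),
            ENNReal.ofReal_inv_of_pos (by linarith)]
      _ ≤ ENNReal.ofReal (KE a b) *
          (locHL f x + Hop (2*a + b + 1) f (4*x) +
            ENNReal.ofReal (x ^ b) * Rop (fun z => z ^ (-b) * f z) x) := by
          refine mul_le_mul' (ENNReal.ofReal_le_ofReal ?_)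
            (le_trans (le_trans ?_ le_self_add) le_self_add)
          · exact le_max_of_le_right (le_max_left _ _)
          · rw [locHL]
            exact le_biSup
              (fun t => (ENNReal.ofReal (2 * t))⁻¹ *
                ∫⁻ z in Set.Icc (x - t) (x + t), ENNReal.ofReal |f z|)
              (⟨ht, hcase⟩ : t ∈ Set.Ioo (0:ℝ) (x/2))
  · rcases le_or_gt t (3*x) with hcase2 | hcase2
    · calc ∫⁻ z in Set.Ioi (0:ℝ), ENNReal.ofReal (PhiE a b t x z * f z * z ^ (2*a + 1))
          ≤ ∫⁻ z in Set.Ioo 0 (4*x), ENNReal.ofReal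
              (K2E a b * ((4*x) ^ (-(2*a + b + 1)) * (z ^ (2*a + b + 1 - 1) * f z))) :=
            lint_aux measurableSet_Ioo
              (fun z hz => E2_pt a b t x z hab hx hcase hcase2 (Set.mem_Ioi.mp hz) f hf)
        _ = ENNReal.ofReal (K2E a b) * (ENNReal.ofReal ((4*x) ^ (-(2*a + b + 1))) *
            ∫⁻ z in Set.Ioo 0 (4*x), ENNReal.ofReal (z ^ (2*a + b + 1 - 1) * f z)) := by
            rw [lint_const _ (K2E_nonneg a b),
              lint_const _ (Real.rpow_nonneg (by positivity) _)]
        _ = ENNReal.ofReal (K2E a b) * Hop (2*a + b + 1) f (4*x) := by rw [Hop]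
        _ ≤ ENNReal.ofReal (KE a b) *
            (locHL f x + Hop (2*a + b + 1) f (4*x) +
              ENNReal.ofReal (x ^ b) * Rop (fun z => z ^ (-b) * f z) x) := by
            refine mul_le_mul' (ENNReal.ofReal_le_ofReal ?_) (le_trans le_add_self le_self_add)
            exact le_max_of_le_right (le_max_of_le_right (le_max_left _ _))
    · calc ∫⁻ z in Set.Ioi (0:ℝ), ENNReal.ofReal (PhiE a b t x z * f z * z ^ (2*a + 1))
          ≤ ∫⁻ z in Set.Icc (t-x) (t+x), ENNReal.ofReal
              (K3E a b * (x ^ b * ((2*x)⁻¹ * |z ^ (-b) * f z|))) :=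
            lint_aux measurableSet_Icc
              (fun z hz => E3_pt a b t x z hab hx hcase2 (Set.mem_Ioi.mp hz) f (hf z))
        _ = ENNReal.ofReal (K3E a b) * (ENNReal.ofReal (x ^ b) *
            ((ENNReal.ofReal (2*x))⁻¹ *
              ∫⁻ z in Set.Icc (t-x) (t+x), ENNReal.ofReal |z ^ (-b) * f z|)) := by
            rw [lint_const _ (K3E_nonneg a b), lint_const _ (Real.rpow_nonneg hx.le b),
              lint_const _ (by positivity : (0:ℝ) ≤ (2*x)⁻¹) (fun z => |z ^ (-b) * f z|),
              ENNReal.ofReal_inv_of_pos (by linarith)]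
        _ ≤ ENNReal.ofReal (KE a b) *
            (locHL f x + Hop (2*a + b + 1) f (4*x) +
              ENNReal.ofReal (x ^ b) * Rop (fun z => z ^ (-b) * f z) x) := by
            refine mul_le_mul' (ENNReal.ofReal_le_ofReal
              (le_max_of_le_right (le_max_of_le_right (le_max_right _ _))))
              (le_trans (mul_le_mul' le_rfl ?_) le_add_self)
            rw [Rop]
            exact le_biSup
              (fun t => (ENNReal.ofReal (2 * x))⁻¹ *
                ∫⁻ z in Set.Icc (t - x) (t + x), ENNReal.ofReal |z ^ (-b) * f z|)
              (Set.mem_Ioi.mpr (by linarith : 2*x < t))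

lemma partF (a b : ℝ) (ha : -1 < a) (hab : 1/2 ≤ a + b) (f : ℝ → ℝ) (hfm : Measurable f)
    (hf : ∀ z, 0 ≤ f z) (x : ℝ) (hx : 0 < x) :
    PhiStarF a b f x ≤ ENNReal.ofReal (KF a b) *
      ((if 1 ≤ b then Hop (2*a + 2) f (2*x) else 0) +
        (if b < 1 then Hop (2*a + b + 1) f (2*x) else 0) +
        Nop (2*a + 2) f x + Tmax (1 - b) f x) := by
  rw [PhiStarF]
  refine iSup₂_le fun t ht => ?_
  rw [Set.mem_Ioi] at ht
  have hone : (1:ℝ≥0∞) ≤ ENNReal.ofReal (KF a b) :=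
    ENNReal.one_le_ofReal.mpr (le_max_left _ _)
  rcases le_or_gt t x with htx | htx
  · calc ∫⁻ z in Set.Ioi (0:ℝ), ENNReal.ofReal (PhiF a b t x z * f z * z ^ (2*a + 1))
        ≤ ∫⁻ z in Set.Ioi (0:ℝ), 0 :=
          setLIntegral_mono' measurableSet_Ioi (fun z hz => by
            rw [Set.mem_Ioi] at hz
            rw [PhiF, if_neg (not_lt.mpr (by linarith)), zero_mul, zero_mul,
              ENNReal.ofReal_zero])
      _ = 0 := lintegral_zero
      _ ≤ _ := zero_le'
  · rcases le_or_gt 1 b with hb | hb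
    · calc ∫⁻ z in Set.Ioi (0:ℝ), ENNReal.ofReal (PhiF a b t x z * f z * z ^ (2*a + 1))
          ≤ ∫⁻ z in Set.Ioo 0 t, ENNReal.ofReal
              (t ^ (-(2*a + 2)) * (z ^ (2*a + 2 - 1) * |f z|)) :=
            lint_aux measurableSet_Ioo
              (fun z hz => F1_pt a b t x z hb hx htx (Set.mem_Ioi.mp hz) f hf)
        _ = ENNReal.ofReal (t ^ (-(2*a + 2))) *
            ∫⁻ z in Set.Ioo 0 t, ENNReal.ofReal (z ^ (2*a + 2 - 1) * |f z|) :=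
            lint_const _ (Real.rpow_nonneg (by linarith) _) _ _
        _ ≤ Nop (2*a + 2) f x := by
            rw [Nop]
            exact le_biSup
              (fun t => ENNReal.ofReal (t ^ (-(2*a + 2))) *
                ∫⁻ z in Set.Ioo 0 t, ENNReal.ofReal (z ^ (2*a + 2 - 1) * |f z|))
              (Set.mem_Ioi.mpr htx)
        _ ≤ (if 1 ≤ b then Hop (2*a + 2) f (2*x) else 0) +
            (if b < 1 then Hop (2*a + b + 1) f (2*x) else 0) +
            Nop (2*a + 2) f x + Tmax (1 - b) f x := le_trans le_add_self le_self_add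
        _ ≤ _ := le_mul_of_one_le_left (zero_le') hone
    · rcases le_or_gt t (2*x) with h2 | h2
      · rw [if_neg (not_le.mpr hb), if_pos hb]
        calc ∫⁻ z in Set.Ioi (0:ℝ), ENNReal.ofReal (PhiF a b t x z * f z * z ^ (2*a + 1))
            ≤ ∫⁻ z in Set.Ioo 0 (2*x), ENNReal.ofReal
                (K4F a b * ((2*x) ^ (-(2*a + b + 1)) * (z ^ (2*a + b + 1 - 1) * f z))) :=
              lint_aux measurableSet_Ioo
                (fun z hz => F2_pt a b t x z hab hb hx htx h2 (Set.mem_Ioi.mp hz) f hf)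
          _ = ENNReal.ofReal (K4F a b) * (ENNReal.ofReal ((2*x) ^ (-(2*a + b + 1))) *
              ∫⁻ z in Set.Ioo 0 (2*x), ENNReal.ofReal (z ^ (2*a + b + 1 - 1) * f z)) := by
              rw [lint_const _ (K4F_nonneg a b),
                lint_const _ (Real.rpow_nonneg (by positivity) _)]
          _ = ENNReal.ofReal (K4F a b) * Hop (2*a + b + 1) f (2*x) := by rw [Hop]
          _ ≤ ENNReal.ofReal (KF a b) *
              (0 + Hop (2*a + b + 1) f (2*x) + Nop (2*a + 2) f x + Tmax (1 - b) f x) := by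
              refine mul_le_mul' (ENNReal.ofReal_le_ofReal
                (le_max_of_le_right (le_max_left _ _)))
                (le_trans le_add_self (le_trans le_self_add le_self_add))
      · calc ∫⁻ z in Set.Ioi (0:ℝ), ENNReal.ofReal (PhiF a b t x z * f z * z ^ (2*a + 1))
            ≤ ∫⁻ z in Set.Ioi (0:ℝ),
                ((Set.Ioo 0 t).indicator (fun z => ENNReal.ofReal
                  (K5F b * (t ^ (-(2*a + 2)) * (z ^ (2*a + 2 - 1) * |f z|)))) z
                + (Set.Ioo (t/2) t).indicator (fun z => ENNReal.ofReal
                  (K6F b * (z ^ (1 - b - 1) * |f z| * (t - z + x) ^ (-(1 - b))))) z) :=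
              setLIntegral_mono' measurableSet_Ioi
                (fun z hz => F34_pt a b t x z ha hab hb hx h2 (Set.mem_Ioi.mp hz) f hf)
          _ = (∫⁻ z in Set.Ioi (0:ℝ), (Set.Ioo 0 t).indicator (fun z => ENNReal.ofReal
                  (K5F b * (t ^ (-(2*a + 2)) * (z ^ (2*a + 2 - 1) * |f z|)))) z)
              + ∫⁻ z in Set.Ioi (0:ℝ), (Set.Ioo (t/2) t).indicator (fun z => ENNReal.ofReal
                  (K6F b * (z ^ (1 - b - 1) * |f z| * (t - z + x) ^ (-(1 - b))))) z :=
              lintegral_add_left ((Measurable.indicator (by fun_prop) measurableSet_Ioo)) _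
          _ ≤ (∫⁻ z in Set.Ioo 0 t, ENNReal.ofReal
                  (K5F b * (t ^ (-(2*a + 2)) * (z ^ (2*a + 2 - 1) * |f z|))))
              + ∫⁻ z in Set.Ioo (t/2) t, ENNReal.ofReal
                  (K6F b * (z ^ (1 - b - 1) * |f z| * (t - z + x) ^ (-(1 - b)))) :=
              add_le_add (lint_ind measurableSet_Ioo) (lint_ind measurableSet_Ioo)
          _ = ENNReal.ofReal (K5F b) * (ENNReal.ofReal (t ^ (-(2*a + 2))) *
                ∫⁻ z in Set.Ioo 0 t, ENNReal.ofReal (z ^ (2*a + 2 - 1) * |f z|))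
              + ENNReal.ofReal (K6F b) * ∫⁻ z in Set.Ioo (t/2) t, ENNReal.ofReal
                  (z ^ (1 - b - 1) * |f z| * (t - z + x) ^ (-(1 - b))) := by
              rw [lint_const _ (K5F_nonneg b), lint_const _ (Real.rpow_nonneg (by linarith) _),
                lint_const _ (K6F_nonneg b)]
          _ ≤ ENNReal.ofReal (KF a b) * Nop (2*a + 2) f x
              + ENNReal.ofReal (KF a b) * Tmax (1 - b) f x := by
              refine add_le_add (mul_le_mul' (ENNReal.ofReal_le_ofReal
                  (le_max_of_le_right (le_max_of_le_right (le_max_left _ _)))) ?_)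
                (mul_le_mul' (ENNReal.ofReal_le_ofReal
                  (le_max_of_le_right (le_max_of_le_right (le_max_right _ _)))) ?_)
              · rw [Nop]
                exact le_biSup
                  (fun t => ENNReal.ofReal (t ^ (-(2*a + 2))) *
                    ∫⁻ z in Set.Ioo 0 t, ENNReal.ofReal (z ^ (2*a + 2 - 1) * |f z|))
                  (Set.mem_Ioi.mpr (by linarith : x < t))
              · rw [Tmax]
                exact le_biSup
                  (fun t => ∫⁻ z in Set.Ioo (t/2) t,
                    ENNReal.ofReal (z ^ (1 - b - 1) * |f z| * (t - z + x) ^ (-(1 - b))))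
                  (Set.mem_Ioi.mpr h2)
          _ = ENNReal.ofReal (KF a b) * (Nop (2*a + 2) f x + Tmax (1 - b) f x) :=
              (mul_add _ _ _).symm
          _ ≤ ENNReal.ofReal (KF a b) *
              ((if 1 ≤ b then Hop (2*a + 2) f (2*x) else 0) +
                (if b < 1 then Hop (2*a + b + 1) f (2*x) else 0) +
                Nop (2*a + 2) f x + Tmax (1 - b) f x) :=
              mul_le_mul' le_rfl (add_le_add (le_add_self) le_rfl)

/-- control of Φ_{*,E} and Φ_{*,F} by the special operators. -/
theorem PhiStar_controlled (a b : ℝ) (ha : -1 < a) (hab : 1/2 ≤ a + b) :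
    ∃ C : ℝ≥0, ∀ f : ℝ → ℝ, Measurable f → (∀ z, 0 ≤ f z) → ∀ x : ℝ, 0 < x →
      PhiStarE a b f x ≤
        C * (locHL f x + Hop (2*a + b + 1) f (4*x) +
          ENNReal.ofReal (x ^ b) * Rop (fun z => z ^ (-b) * f z) x) ∧
      PhiStarF a b f x ≤
        C * ((if 1 ≤ b then Hop (2*a + 2) f (2*x) else 0) +
          (if b < 1 then Hop (2*a + b + 1) f (2*x) else 0) +
          Nop (2*a + 2) f x + Tmax (1 - b) f x) := by
  refine ⟨(max (KE a b) (KF a b)).toNNReal, fun f hfm hf x hx => ⟨?_, ?_⟩⟩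
  · refine le_trans (partE a b hab f hf x hx) (mul_le_mul' ?_ le_rfl)
    exact ENNReal.ofReal_le_ofReal (le_max_left _ _)
  · refine le_trans (partF a b ha hab f hfm hf x hx) (mul_le_mul' ?_ le_rfl)
    exact ENNReal.ofReal_le_ofReal (le_max_right _ _)
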